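/- Let ℓ : ℝ × {0,1} → ℝ be symmetric with constant C, and let 0 ≤ η < 1/2. Then for any two predictors f, g, the difference of noisy risks satisfies R_η(f) − R_η(g) = (1 − 2η)·(R(f) − R(g)). In particular, the noisy risk preserves the strict ordering of predictors by clean risk: R(f) < R(g) implies R_η(f) < R_η(g). -/
import Mathlib


open MeasureTheory

lemma noisy_int {X : Type*} [MeasurableSpace X]
    (μ : Measure (X × Bool)) [IsProbabilityMeasure μ]
    (ℓ : ℝ → Bool → ℝ) (C : ℝ) (hsym : ∀ z, ℓ z false + ℓ z true = C)
    (η : ℝ) (f : X → ℝ)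
    (hf : Integrable (fun p : X × Bool => ℓ (f p.1) p.2) μ) :
    (∫ p, ((1 - η) * ℓ (f p.1) p.2 + η * ℓ (f p.1) (!p.2)) ∂μ)
      = (1 - 2 * η) * (∫ p, ℓ (f p.1) p.2 ∂μ) + η * C := by
  have key : ∀ p : X × Bool,
      (1 - η) * ℓ (f p.1) p.2 + η * ℓ (f p.1) (!p.2)
        = (1 - 2 * η) * ℓ (f p.1) p.2 + η * C := by
    intro p
    have h := hsym (f p.1)
    cases p.2 <;> simp only [Bool.not_false, Bool.not_true] <;> linear_combination η * h
  rw [show (fun p : X × Bool => (1 - η) * ℓ (f p.1) p.2 + η * ℓ (f p.1) (!p.2))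
      = fun p => (1 - 2 * η) * ℓ (f p.1) p.2 + η * C from funext key]
  rw [integral_add (hf.const_mul _) (integrable_const _), integral_const_mul,
    integral_const]
  simp

/-- For a symmetric loss and uniform label noise of rate `η < 1/2`, the noisy-risk
difference is `(1-2η)` times the clean-risk difference, and the strict risk
ordering of predictors is preserved. -/
theorem noisy_risk_preserves_order {X : Type*} [MeasurableSpace X]
    (μ : Measure (X × Bool)) [IsProbabilityMeasure μ]
    (ℓ : ℝ → Bool → ℝ) (C : ℝ) (hsym : ∀ z, ℓ z false + ℓ z true = C)
    (η : ℝ) (hη0 : 0 ≤ η) (hη : η < 1 / 2)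
    (f g : X → ℝ)
    (hf : Integrable (fun p : X × Bool => ℓ (f p.1) p.2) μ)
    (hg : Integrable (fun p : X × Bool => ℓ (g p.1) p.2) μ) :
    ((∫ p, ((1 - η) * ℓ (f p.1) p.2 + η * ℓ (f p.1) (!p.2)) ∂μ) -
        ∫ p, ((1 - η) * ℓ (g p.1) p.2 + η * ℓ (g p.1) (!p.2)) ∂μ
      = (1 - 2 * η) *
          ((∫ p, ℓ (f p.1) p.2 ∂μ) - ∫ p, ℓ (g p.1) p.2 ∂μ)) ∧
    ((∫ p, ℓ (f p.1) p.2 ∂μ) < (∫ p, ℓ (g p.1) p.2 ∂μ) →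
      (∫ p, ((1 - η) * ℓ (f p.1) p.2 + η * ℓ (f p.1) (!p.2)) ∂μ) <
        ∫ p, ((1 - η) * ℓ (g p.1) p.2 + η * ℓ (g p.1) (!p.2)) ∂μ) := by
  rw [noisy_int μ ℓ C hsym η f hf, noisy_int μ ℓ C hsym η g hg]
  constructor
  · ring
  · intro h
    nlinarith
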